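/- If a permutation w ∈ S_N contains a pattern π ∈ S_n with n < N, then there exist an index i and value k such that w = I_i^k(v) for some v ∈ S_{N-1} that still contains π; consequently w can be obtained from π by a sequence of insertions. -/

import Mathlib

/-- Pattern containment. -/
def ContainsPattern {N n : ℕ} (W : Equiv.Perm (Fin N)) (w : Equiv.Perm (Fin n)) : Prop :=
  ∃ f : Fin n → Fin N, StrictMono f ∧ ∀ a b, W (f a) < W (f b) ↔ w a < w b

/-- The insertion `I_i^k(v)`: place the value `k` at position `i`, and at all
other positions use the values of `v` with each value `≥ k` increased by one. -/
def insertFun {n : ℕ} (w : Equiv.Perm (Fin n)) (i k : Fin (n + 1)) :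
    Fin (n + 1) → Fin (n + 1) :=
  i.insertNth k fun j => k.succAbove (w j)

/-- If `w ∈ S_{N+1}` contains a pattern `π ∈ S_n` with `n < N + 1`, then
`w = I_i^k(v)` for some position `i`, value `k`, and `v ∈ S_N` which still
contains `π` (hence, iterating, `w` is obtained from `π` by insertions). -/
theorem exists_insertion_of_properly_contains {N n : ℕ}
    (w : Equiv.Perm (Fin (N + 1))) (π : Equiv.Perm (Fin n))
    (hn : n < N + 1) (h : ContainsPattern w π) :
    ∃ (v : Equiv.Perm (Fin N)) (i k : Fin (N + 1)),
      (∀ j, w j = insertFun v i k j) ∧ ContainsPattern v π := by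
  obtain ⟨f, hf, hpat⟩ := h
  -- find a position i not in the range of f
  have hnsurj : ¬ Function.Surjective f := by
    intro hs
    have := Fintype.card_le_of_surjective f hs
    simp at this
    omega
  simp only [Function.Surjective, not_forall] at hnsurj
  obtain ⟨i, hi⟩ := hnsurj
  rw [not_exists] at hi
  set k : Fin (N + 1) := w i with hk
  -- w restricts to an equiv between {x ≠ i} and {y ≠ k}
  have hsub : ∀ x : Fin (N + 1), x ≠ i ↔ w x ≠ k := by
    intro x
    constructor
    · intro hx hwx; exact hx (w.injective hwx)
    · intro hwx hx; exact hwx (by rw [hx])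
  let v : Equiv.Perm (Fin N) :=
    (finSuccAboveEquiv i).trans
      ((w.subtypeEquiv hsub).trans (finSuccAboveEquiv k).symm)
  have hkey : ∀ j : Fin N, k.succAbove (v j) = w (i.succAbove j) := by
    intro j
    have : (finSuccAboveEquiv k) (v j) =
        ⟨w (i.succAbove j), (hsub _).mp (i.succAbove_ne j)⟩ := by
      simp only [v, Equiv.trans_apply, Equiv.apply_symm_apply]
      rfl
    have := congrArg Subtype.val this
    simpa [finSuccAboveEquiv_apply] using this
  refine ⟨v, i, k, ?_, ?_⟩
  · intro j
    rcases eq_or_ne j i with rfl | hj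
    · simp [insertFun, hk]
    · obtain ⟨j', rfl⟩ := Fin.exists_succAbove_eq hj
      simp [insertFun, hkey]
  · -- v contains π via f' with i.succAbove (f' j) = f j
    have hfi : ∀ j, f j ≠ i := fun j hj => hi j hj
    let f' : Fin n → Fin N := fun j => (finSuccAboveEquiv i).symm ⟨f j, hfi j⟩
    have hf' : ∀ j, i.succAbove (f' j) = f j := by
      intro j
      have h1 : (finSuccAboveEquiv i) (f' j) = ⟨f j, hfi j⟩ :=
        (finSuccAboveEquiv i).apply_symm_apply _
      rw [finSuccAboveEquiv_apply] at h1
      exact congrArg Subtype.val h1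
    refine ⟨f', ?_, ?_⟩
    · intro a b hab
      have : i.succAbove (f' a) < i.succAbove (f' b) := by
        rw [hf', hf']; exact hf hab
      exact (Fin.succAbove_lt_succAbove_iff).mp this
    · intro a b
      rw [← (Fin.succAbove_lt_succAbove_iff (p := k)), hkey, hkey, hf', hf']
      exact hpat a b
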